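/- Let G = G_A × G_{NA} where G_A is a finite abelian group and G_{NA} is a finite group in which every element is a commutator (e.g. a product of nonabelian finite simple groups). Let S be a symmetric generating set of G containing the identity, and suppose the projection of S^{d_A} to G_A is all of G_A and the projection of S^{d_{NA}} to G_{NA} is all of G_{NA}. Then S^{d_A + 4·d_{NA}} = G. -/

import Mathlib

open Pointwise
open scoped commutatorElement

/-- If `G = G_A × G_NA` with `G_A` finite abelian and every element of the finite group
`G_NA` a commutator, and `S` is a symmetric generating set of `G` containing `1` whose
`d_A`-th power projects onto `G_A` and whose `d_NA`-th power projects onto `G_NA`,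
then `S^(d_A + 4·d_NA) = G`. -/
theorem mixed_product_diameter {A B : Type*} [CommGroup A] [Finite A] [Group B] [Finite B]
    (hOre : ∀ b : B, ∃ x y : B, b = ⁅x, y⁆)
    (S : Set (A × B)) (h1 : (1 : A × B) ∈ S) (hsymm : S⁻¹ = S)
    (hgen : Subgroup.closure S = ⊤) (dA dNA : ℕ)
    (hA : Prod.fst '' (S ^ dA) = Set.univ) (hB : Prod.snd '' (S ^ dNA) = Set.univ) :
    S ^ (dA + 4 * dNA) = Set.univ := by
  have hinv : (S ^ dNA)⁻¹ = S ^ dNA := by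
    rw [← inv_pow, hsymm]
  apply Set.eq_univ_of_forall
  rintro ⟨a, b⟩
  -- get s ∈ S^dA with fst s = a
  obtain ⟨s, hs, hsa⟩ : ∃ s ∈ S ^ dA, s.1 = a := by
    have := hA ▸ Set.mem_univ a
    obtain ⟨s, hs, h⟩ := this
    exact ⟨s, hs, h⟩
  obtain ⟨x, y, hxy⟩ := hOre (s.2⁻¹ * b)
  obtain ⟨u, hu, hux⟩ : ∃ u ∈ S ^ dNA, u.2 = x := by
    have := hB ▸ Set.mem_univ x
    obtain ⟨u, hu, h⟩ := this
    exact ⟨u, hu, h⟩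
  obtain ⟨v, hv, hvy⟩ : ∃ v ∈ S ^ dNA, v.2 = y := by
    have := hB ▸ Set.mem_univ y
    obtain ⟨v, hv, h⟩ := this
    exact ⟨v, hv, h⟩
  have hui : u⁻¹ ∈ S ^ dNA := by rw [← hinv]; exact Set.inv_mem_inv.mpr hu
  have hvi : v⁻¹ ∈ S ^ dNA := by rw [← hinv]; exact Set.inv_mem_inv.mpr hv
  have hmem : s * u * v * u⁻¹ * v⁻¹ ∈ S ^ (dA + 4 * dNA) := by
    have h4 : dA + (4 : ℕ) * dNA = dA + dNA + dNA + dNA + dNA := by ring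
    rw [h4, pow_add, pow_add, pow_add, pow_add]
    exact Set.mul_mem_mul (Set.mul_mem_mul (Set.mul_mem_mul (Set.mul_mem_mul hs hu) hv)
      hui) hvi
  have heq : s * u * v * u⁻¹ * v⁻¹ = (a, b) := by
    have h1 : (s * u * v * u⁻¹ * v⁻¹).1 = a := by
      have hc : u.1 * (v.1 * (u.1⁻¹ * v.1⁻¹)) = 1 := by
        rw [← mul_assoc, ← mul_assoc, mul_inv_cancel_comm, mul_inv_cancel]
      have hsplit : (s * u * v * u⁻¹ * v⁻¹).1 = s.1 * (u.1 * (v.1 * (u.1⁻¹ * v.1⁻¹))) := by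
        simp [Prod.fst_mul, Prod.fst_inv, mul_assoc]
      rw [hsplit, hc, mul_one, hsa]
    have h2 : (s * u * v * u⁻¹ * v⁻¹).2 = b := by
      have : s.2 * (u.2 * v.2 * u.2⁻¹ * v.2⁻¹) = b := by
        rw [hux, hvy]
        have : x * y * x⁻¹ * y⁻¹ = s.2⁻¹ * b := by
          rw [hxy]; group
        rw [this]; group
      simpa [Prod.snd_mul, Prod.snd_inv, mul_assoc] using this
    exact Prod.ext h1 h2
  exact heq ▸ hmem
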